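/- Consider the three-item all-pay auction with common item values v_1 ≥ v_2 ≥ v_3 > 0 and budgets satisfying B_i ≥ max{(v_1 + v_2 + v_3)/2, v_1} for both i ∈ {1,2}, and suppose (v_1 + v_2 + v_3)/2 > v_1. Let z = (v_1 + v_2 + v_3)/2 and define the points A = (v_1, 0, z − v_1), B = (z − v_2, v_2, 0), C = (0, z − v_3, v_3) in ℝ³. Let D = (z − v_3)/(z − v_2) + 1 + (z − v_3)/(z − v_1), and set P_AB = ((z − v_3)/(z − v_2))/D, P_BC = 1/D, P_CA = ((z − v_3)/(z − v_1))/D. Then the strategy profile in which each player i ∈ {1,2} plays the mixture that, with probability P_AB, is uniform on the segment AB; with probability P_BC, is uniform on the segment BC; and with probability P_CA, is uniform on the segment CA, is a Nash equilibrium. -/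

import Mathlib

open MeasureTheory Set

noncomputable section

/-- Probability that player `i` wins an item of common value `vj` when bidding `xi`
while the opponent bids `xo`: the strictly higher bid wins; on a tie at
`min {B₁, B₂, vj}` the player with the strictly larger `min {Bᵢ, vj}` wins, and all
other ties are fair coins. -/
def winProb3 (B : Fin 2 → ℝ) (vj : ℝ) (i : Fin 2) (xi xo : ℝ) : ℝ :=
  if xo < xi then 1
  else if xi < xo then 0
  else if xi = min (min (B 0) (B 1)) vj ∧ min (B (1 - i)) vj < min (B i) vj then 1
  else if xi = min (min (B 0) (B 1)) vj ∧ min (B i) vj < min (B (1 - i)) vj then 0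
  else 1 / 2

/-- Expected total utility of player `i` from the pure bid vectors `p` (own) and
`q` (opponent) in the three-item auction with common values `v`. -/
def payoff3 (B : Fin 2 → ℝ) (v : Fin 3 → ℝ) (i : Fin 2) (p q : ℝ × ℝ × ℝ) : ℝ :=
  (winProb3 B (v 0) i p.1 q.1 * v 0 - p.1) +
    (winProb3 B (v 1) i p.2.1 q.2.1 * v 1 - p.2.1) +
    (winProb3 B (v 2) i p.2.2 q.2.2 * v 2 - p.2.2)

/-- Feasible bid vectors of a player with budget `Bi` in the three-item auction. -/
def Feas3 (Bi : ℝ) : Set (ℝ × ℝ × ℝ) :=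
  {p | 0 ≤ p.1 ∧ 0 ≤ p.2.1 ∧ 0 ≤ p.2.2 ∧ p.1 + p.2.1 + p.2.2 ≤ Bi}

/-- A mixed strategy with budget `Bi`: a probability measure on the feasible set. -/
def IsStrategy3 (Bi : ℝ) (μ : Measure (ℝ × ℝ × ℝ)) : Prop :=
  IsProbabilityMeasure μ ∧ μ (Feas3 Bi) = 1

/-- Expected utility of player `i` when he plays `μ` and the opponent plays `ν`. -/
def expUtil3 (B : Fin 2 → ℝ) (v : Fin 3 → ℝ) (i : Fin 2)
    (μ ν : Measure (ℝ × ℝ × ℝ)) : ℝ :=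
  ∫ p, (∫ q, payoff3 B v i p q ∂ν) ∂μ

/-- `(F 0, F 1)` is a (mixed) Nash equilibrium of the three-item all-pay auction
with symmetric values. -/
def IsNash3 (B : Fin 2 → ℝ) (v : Fin 3 → ℝ) (F : Fin 2 → Measure (ℝ × ℝ × ℝ)) :
    Prop :=
  (∀ i, IsStrategy3 (B i) (F i)) ∧
  ∀ i, ∀ μ, IsStrategy3 (B i) μ →
    expUtil3 B v i μ (F (1 - i)) ≤ expUtil3 B v i (F i) (F (1 - i))

/-- The uniform distribution on the segment from `a` to `b` in `ℝ³`: the pushforward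
of the uniform distribution on `[0, 1]` under the affine parameterization. -/
def unifSeg3 (a b : ℝ × ℝ × ℝ) : Measure (ℝ × ℝ × ℝ) :=
  Measure.map (fun t : ℝ =>
      ((1 - t) * a.1 + t * b.1,
        (1 - t) * a.2.1 + t * b.2.1,
        (1 - t) * a.2.2 + t * b.2.2))
    (volume.restrict (Icc (0 : ℝ) 1))

def clamp (x : ℝ) : ℝ := max 0 (min 1 x)

lemma clamp_of_nonpos {x : ℝ} (h : x ≤ 0) : clamp x = 0 := by
  unfold clamp
  exact max_eq_left (le_trans (min_le_right _ _) h)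

lemma clamp_of_mem {x : ℝ} (h0 : 0 ≤ x) (h1 : x ≤ 1) : clamp x = x := by
  unfold clamp
  rw [min_eq_right h1, max_eq_right h0]

lemma clamp_of_one_le {x : ℝ} (h : 1 ≤ x) : clamp x = 1 := by
  unfold clamp
  rw [min_eq_left h, max_eq_right zero_le_one]

lemma clamp_nonneg (x : ℝ) : 0 ≤ clamp x := le_max_left _ _

lemma clamp_le_one (x : ℝ) : clamp x ≤ 1 := max_le zero_le_one (min_le_left _ _)

lemma clamp_le_self {x : ℝ} (h : 0 ≤ x) : clamp x ≤ x :=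
  max_le h (min_le_right _ _)

lemma vol_Iio (c : ℝ) : (volume (Iio c ∩ Icc (0:ℝ) 1)).toReal = clamp c := by
  rcases le_or_gt c 0 with h | h
  · have : Iio c ∩ Icc (0:ℝ) 1 = ∅ := by
      ext t; simp only [mem_inter_iff, mem_Iio, mem_Icc, mem_empty_iff_false, iff_false]
      rintro ⟨h1, h2, _⟩; linarith
    rw [this, clamp_of_nonpos h]; simp
  · have h1 : Ico (0:ℝ) (min c 1) ⊆ Iio c ∩ Icc 0 1 := by
      rintro t ⟨ht0, ht1⟩
      exact ⟨lt_of_lt_of_le ht1 (min_le_left _ _), ht0,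
        le_of_lt (lt_of_lt_of_le ht1 (min_le_right _ _))⟩
    have h2 : Iio c ∩ Icc (0:ℝ) 1 ⊆ Icc 0 (min c 1) := by
      rintro t ⟨htc, ht0, ht1⟩
      exact ⟨ht0, le_min (le_of_lt htc) ht1⟩
    have e1 : volume (Ico (0:ℝ) (min c 1)) = ENNReal.ofReal (min c 1) := by
      rw [Real.volume_Ico]; norm_num
    have e2 : volume (Icc (0:ℝ) (min c 1)) = ENNReal.ofReal (min c 1) := by
      rw [Real.volume_Icc]; norm_num
    have : volume (Iio c ∩ Icc (0:ℝ) 1) = ENNReal.ofReal (min c 1) :=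
      le_antisymm (e2 ▸ measure_mono h2) (e1 ▸ measure_mono h1)
    rw [this, ENNReal.toReal_ofReal (le_min h.le zero_le_one)]
    unfold clamp
    rw [min_comm c 1, max_eq_right (le_min zero_le_one h.le)]

lemma vol_Ioi (d : ℝ) : (volume (Ioi d ∩ Icc (0:ℝ) 1)).toReal = clamp (1 - d) := by
  rcases le_or_gt 1 d with h | h
  · have : Ioi d ∩ Icc (0:ℝ) 1 = ∅ := by
      ext t; simp only [mem_inter_iff, mem_Ioi, mem_Icc, mem_empty_iff_false, iff_false]
      rintro ⟨h1, _, h3⟩; linarith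
    rw [this, clamp_of_nonpos (by linarith)]; simp
  · have h1 : Ioc (max d 0) 1 ⊆ Ioi d ∩ Icc 0 1 := by
      rintro t ⟨ht0, ht1⟩
      exact ⟨lt_of_le_of_lt (le_max_left _ _) ht0,
        le_of_lt (lt_of_le_of_lt (le_max_right _ _) ht0), ht1⟩
    have h2 : Ioi d ∩ Icc (0:ℝ) 1 ⊆ Icc (max d 0) 1 := by
      rintro t ⟨htd, ht0, ht1⟩
      exact ⟨max_le (le_of_lt htd) ht0, ht1⟩
    have e1 : volume (Ioc (max d 0) 1) = ENNReal.ofReal (1 - max d 0) := by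
      rw [Real.volume_Ioc]
    have e2 : volume (Icc (max d 0) 1) = ENNReal.ofReal (1 - max d 0) := by
      rw [Real.volume_Icc]
    have : volume (Ioi d ∩ Icc (0:ℝ) 1) = ENNReal.ofReal (1 - max d 0) :=
      le_antisymm (e2 ▸ measure_mono h2) (e1 ▸ measure_mono h1)
    have hm : max d 0 ≤ 1 := max_le h.le zero_le_one
    rw [this, ENNReal.toReal_ofReal (by linarith)]
    rcases le_total d 0 with hd | hd
    · rw [max_eq_right hd, clamp_of_one_le (by linarith)]; norm_num
    · rw [max_eq_left hd, clamp_of_mem (by linarith) (by linarith)]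

lemma clampIdentity (W1 W2 s w x : ℝ) (hs : 0 < s) (hw : 0 < w)
    (hW1 : 0 ≤ W1) (hW2 : 0 ≤ W2) (hid : W2 * w = W1 * s) :
    W1 * clamp ((x - s)/w) + W2 * clamp (x/s) = (W1 + W2) * clamp (x/(s+w)) := by
  have hL : 0 < s + w := by linarith
  rcases le_or_gt x 0 with h | h
  · rw [clamp_of_nonpos (div_nonpos_of_nonpos_of_nonneg (by linarith) hw.le),
      clamp_of_nonpos (div_nonpos_of_nonpos_of_nonneg h hs.le),
      clamp_of_nonpos (div_nonpos_of_nonpos_of_nonneg h hL.le)]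
    ring
  rcases le_or_gt x s with h2 | h2
  · rw [clamp_of_nonpos (div_nonpos_of_nonpos_of_nonneg (by linarith) hw.le),
      clamp_of_mem (div_nonneg h.le hs.le) ((div_le_one hs).mpr h2),
      clamp_of_mem (div_nonneg h.le hL.le) ((div_le_one hL).mpr (by linarith))]
    field_simp
    nlinarith [hid]
  rcases le_or_gt x (s + w) with h3 | h3
  · rw [clamp_of_mem (div_nonneg (by linarith) hw.le) ((div_le_one hw).mpr (by linarith)),
      clamp_of_one_le ((one_le_div hs).mpr h2.le),
      clamp_of_mem (div_nonneg h.le hL.le) ((div_le_one hL).mpr h3)]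
    field_simp
    nlinarith [hid]
  · rw [clamp_of_one_le ((one_le_div hw).mpr (by linarith)),
      clamp_of_one_le ((one_le_div hs).mpr (by linarith)),
      clamp_of_one_le ((one_le_div hL).mpr (by linarith))]
    ring



variable {B : Fin 2 → ℝ} {vj : ℝ} {i : Fin 2}

lemma winProb3_meas (x : ℝ) : Measurable fun xo => winProb3 B vj i x xo := by
  unfold winProb3
  apply Measurable.ite (measurableSet_lt measurable_id measurable_const)
    measurable_const
  apply Measurable.ite (measurableSet_lt measurable_const measurable_id)
    measurable_const
  exact measurable_const.ite (by
    by_cases h : x = min (min (B 0) (B 1)) vj ∧ min (B (1 - i)) vj < min (B i) vj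
    · simp [h]
    · simp [h]) (measurable_const.ite (by
        by_cases h : x = min (min (B 0) (B 1)) vj ∧ min (B i) vj < min (B (1 - i)) vj
        · simp [h]
        · simp [h]) measurable_const)

lemma winProb3_nonneg (x y : ℝ) : 0 ≤ winProb3 B vj i x y := by
  unfold winProb3
  repeat' split
  all_goals norm_num

lemma winProb3_le_one (x y : ℝ) : winProb3 B vj i x y ≤ 1 := by
  unfold winProb3
  repeat' split
  all_goals norm_num

/-- Key segment computation. -/
lemma integral_winProb3_affine (α β x : ℝ) (hne : α ≠ β) :
    ∫ t in Icc (0:ℝ) 1, winProb3 B vj i x ((1 - t) * α + t * β)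
      = clamp ((x - min α β) / (max α β - min α β)) := by
  rcases lt_or_gt_of_ne hne with hab | hab
  · -- increasing
    set c : ℝ := (x - α) / (β - α) with hc
    have hba : (0:ℝ) < β - α := by linarith
    have hae : (fun t => winProb3 B vj i x ((1 - t) * α + t * β))
        =ᵐ[volume.restrict (Icc (0:ℝ) 1)] (Iio c).indicator (1 : ℝ → ℝ) := by
      apply ae_restrict_of_ae
      rw [ae_iff]
      refine measure_mono_null (fun t ht => ?_) (measure_singleton c)
      simp only [mem_setOf_eq] at ht
      by_contra htc
      simp only [mem_singleton_iff] at htc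
      rcases lt_or_gt_of_ne htc with h | h
      · have hlt : (1 - t) * α + t * β < x := by
          have := (lt_div_iff₀ hba).mp h
          nlinarith
        apply ht
        rw [indicator_of_mem (by exact h : t ∈ Iio c), Pi.one_apply]
        unfold winProb3
        rw [if_pos hlt]
      · have hgt : x < (1 - t) * α + t * β := by
          have := (div_lt_iff₀ hba).mp h
          nlinarith
        apply ht
        rw [indicator_of_notMem (by simp [mem_Iio]; linarith : t ∉ Iio c)]
        unfold winProb3
        rw [if_neg (by linarith), if_pos hgt]
    rw [integral_congr_ae hae, integral_indicator_one measurableSet_Iio,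
      measureReal_def, Measure.restrict_apply measurableSet_Iio, vol_Iio,
      min_eq_left hab.le, max_eq_right hab.le]
  · -- decreasing
    set d : ℝ := (α - x) / (α - β) with hd
    have hba : (0:ℝ) < α - β := by linarith
    have hae : (fun t => winProb3 B vj i x ((1 - t) * α + t * β))
        =ᵐ[volume.restrict (Icc (0:ℝ) 1)] (Ioi d).indicator (1 : ℝ → ℝ) := by
      apply ae_restrict_of_ae
      rw [ae_iff]
      refine measure_mono_null (fun t ht => ?_) (measure_singleton d)
      simp only [mem_setOf_eq] at ht
      by_contra htd
      simp only [mem_singleton_iff] at htd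
      rcases lt_or_gt_of_ne htd with h | h
      · have hgt : x < (1 - t) * α + t * β := by
          have := (lt_div_iff₀ hba).mp h
          nlinarith
        apply ht
        rw [indicator_of_notMem (by simp [mem_Ioi]; linarith : t ∉ Ioi d)]
        unfold winProb3
        rw [if_neg (by linarith), if_pos hgt]
      · have hlt : (1 - t) * α + t * β < x := by
          have := (div_lt_iff₀ hba).mp h
          nlinarith
        apply ht
        rw [indicator_of_mem (by exact h : t ∈ Ioi d), Pi.one_apply]
        unfold winProb3
        rw [if_pos hlt]
    rw [integral_congr_ae hae, integral_indicator_one measurableSet_Ioi,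
      measureReal_def, Measure.restrict_apply measurableSet_Ioi, vol_Ioi,
      min_eq_right hab.le, max_eq_left hab.le]
    have h1d : 1 - d = (x - β) / (α - β) := by
      rw [hd, one_sub_div hba.ne']
      congr 1
      ring
    rw [h1d]


def segMap (a b : ℝ × ℝ × ℝ) : ℝ → ℝ × ℝ × ℝ := fun t =>
  ((1 - t) * a.1 + t * b.1, (1 - t) * a.2.1 + t * b.2.1, (1 - t) * a.2.2 + t * b.2.2)

lemma unifSeg3_eq (a b : ℝ × ℝ × ℝ) :
    unifSeg3 a b = Measure.map (segMap a b) (volume.restrict (Icc (0:ℝ) 1)) := rfl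

lemma segMap_measurable (a b : ℝ × ℝ × ℝ) : Measurable (segMap a b) := by
  unfold segMap; fun_prop

instance instProbIcc : IsProbabilityMeasure (volume.restrict (Icc (0:ℝ) 1)) := by
  constructor
  rw [Measure.restrict_apply_univ, Real.volume_Icc]
  norm_num

instance unifSeg3_prob (a b : ℝ × ℝ × ℝ) : IsProbabilityMeasure (unifSeg3 a b) := by
  rw [unifSeg3_eq]
  exact Measure.isProbabilityMeasure_map (segMap_measurable a b).aemeasurable

lemma integral_unifSeg (a b : ℝ × ℝ × ℝ) (f : ℝ × ℝ × ℝ → ℝ) (hf : Measurable f) :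
    ∫ q, f q ∂(unifSeg3 a b) = ∫ t in Icc (0:ℝ) 1, f (segMap a b t) := by
  rw [unifSeg3_eq]
  exact integral_map (segMap_measurable a b).aemeasurable hf.aestronglyMeasurable

lemma unifSeg3_apply_eq_one (a b : ℝ × ℝ × ℝ) {S : Set (ℝ × ℝ × ℝ)}
    (hS : MeasurableSet S) (h : ∀ t ∈ Icc (0:ℝ) 1, segMap a b t ∈ S) :
    unifSeg3 a b S = 1 := by
  rw [unifSeg3_eq, Measure.map_apply (segMap_measurable a b) hS,
    Measure.restrict_apply (hS.preimage (segMap_measurable a b))]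
  have heq : segMap a b ⁻¹' S ∩ Icc 0 1 = Icc (0:ℝ) 1 :=
    inter_eq_self_of_subset_right (fun t ht => h t ht)
  rw [heq, Real.volume_Icc]
  norm_num

variable {v : Fin 3 → ℝ}

lemma integrable_winProb_seg (vj x : ℝ) (proj : ℝ × ℝ × ℝ → ℝ)
    (hproj : Measurable proj) (a b : ℝ × ℝ × ℝ) :
    Integrable (fun q => winProb3 B vj i x (proj q)) (unifSeg3 a b) := by
  refine (integrable_const (1:ℝ)).mono'
    (((winProb3_meas x).comp hproj).aestronglyMeasurable) ?_
  refine ae_of_all _ fun q => ?_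
  rw [Real.norm_eq_abs, abs_of_nonneg (winProb3_nonneg _ _)]
  exact winProb3_le_one _ _

lemma integrable_payoff_seg (p a b : ℝ × ℝ × ℝ) :
    Integrable (fun q => payoff3 B v i p q) (unifSeg3 a b) := by
  have h1 := ((integrable_winProb_seg (B := B) (i := i) (v 0) p.1 (fun q => q.1) measurable_fst a b).mul_const
    (v 0)).sub (integrable_const p.1)
  have h2 := ((integrable_winProb_seg (B := B) (i := i) (v 1) p.2.1 (fun q => q.2.1)
    (measurable_fst.comp measurable_snd) a b).mul_const (v 1)).sub (integrable_const p.2.1)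
  have h3 := ((integrable_winProb_seg (B := B) (i := i) (v 2) p.2.2 (fun q => q.2.2)
    (measurable_snd.comp measurable_snd) a b).mul_const (v 2)).sub (integrable_const p.2.2)
  exact (h1.add h2).add h3

lemma integral_payoff_seg (p a b : ℝ × ℝ × ℝ)
    (h1 : a.1 ≠ b.1) (h2 : a.2.1 ≠ b.2.1) (h3 : a.2.2 ≠ b.2.2) :
    ∫ q, payoff3 B v i p q ∂(unifSeg3 a b) =
      (clamp ((p.1 - min a.1 b.1) / (max a.1 b.1 - min a.1 b.1)) * v 0 - p.1) +
      (clamp ((p.2.1 - min a.2.1 b.2.1) / (max a.2.1 b.2.1 - min a.2.1 b.2.1)) * v 1 - p.2.1) +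
      (clamp ((p.2.2 - min a.2.2 b.2.2) / (max a.2.2 b.2.2 - min a.2.2 b.2.2)) * v 2 - p.2.2) := by
  have w1 := integrable_winProb_seg (B := B) (i := i) (v 0) p.1 (fun q => q.1) measurable_fst a b
  have w2 := integrable_winProb_seg (B := B) (i := i) (v 1) p.2.1 (fun q => q.2.1)
    (measurable_fst.comp measurable_snd) a b
  have w3 := integrable_winProb_seg (B := B) (i := i) (v 2) p.2.2 (fun q => q.2.2)
    (measurable_snd.comp measurable_snd) a b
  have f1 : Integrable (fun q : ℝ × ℝ × ℝ => winProb3 B (v 0) i p.1 q.1 * v 0 - p.1)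
      (unifSeg3 a b) := (w1.mul_const (v 0)).sub (integrable_const p.1)
  have f2 : Integrable (fun q : ℝ × ℝ × ℝ => winProb3 B (v 1) i p.2.1 q.2.1 * v 1 - p.2.1)
      (unifSeg3 a b) := (w2.mul_const (v 1)).sub (integrable_const p.2.1)
  have f3 : Integrable (fun q : ℝ × ℝ × ℝ => winProb3 B (v 2) i p.2.2 q.2.2 * v 2 - p.2.2)
      (unifSeg3 a b) := (w3.mul_const (v 2)).sub (integrable_const p.2.2)
  have f12 : Integrable (fun q : ℝ × ℝ × ℝ => (winProb3 B (v 0) i p.1 q.1 * v 0 - p.1) +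
      (winProb3 B (v 1) i p.2.1 q.2.1 * v 1 - p.2.1)) (unifSeg3 a b) := f1.add f2
  have I1 : ∫ q, winProb3 B (v 0) i p.1 q.1 ∂(unifSeg3 a b)
      = clamp ((p.1 - min a.1 b.1) / (max a.1 b.1 - min a.1 b.1)) := by
    rw [integral_unifSeg a b (fun q => winProb3 B (v 0) i p.1 q.1)
      ((winProb3_meas p.1).comp measurable_fst)]
    exact integral_winProb3_affine a.1 b.1 p.1 h1
  have I2 : ∫ q, winProb3 B (v 1) i p.2.1 q.2.1 ∂(unifSeg3 a b)
      = clamp ((p.2.1 - min a.2.1 b.2.1) / (max a.2.1 b.2.1 - min a.2.1 b.2.1)) := by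
    rw [integral_unifSeg a b (fun q => winProb3 B (v 1) i p.2.1 q.2.1)
      ((winProb3_meas p.2.1).comp (measurable_fst.comp measurable_snd))]
    exact integral_winProb3_affine a.2.1 b.2.1 p.2.1 h2
  have I3 : ∫ q, winProb3 B (v 2) i p.2.2 q.2.2 ∂(unifSeg3 a b)
      = clamp ((p.2.2 - min a.2.2 b.2.2) / (max a.2.2 b.2.2 - min a.2.2 b.2.2)) := by
    rw [integral_unifSeg a b (fun q => winProb3 B (v 2) i p.2.2 q.2.2)
      ((winProb3_meas p.2.2).comp (measurable_snd.comp measurable_snd))]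
    exact integral_winProb3_affine a.2.2 b.2.2 p.2.2 h3
  have : (fun q => payoff3 B v i p q) = fun q =>
      (winProb3 B (v 0) i p.1 q.1 * v 0 - p.1) +
      (winProb3 B (v 1) i p.2.1 q.2.1 * v 1 - p.2.1) +
      (winProb3 B (v 2) i p.2.2 q.2.2 * v 2 - p.2.2) := rfl
  rw [this, integral_add f12 f3, integral_add f1 f2,
    integral_sub (w1.mul_const _) (integrable_const _),
    integral_sub (w2.mul_const _) (integrable_const _),
    integral_sub (w3.mul_const _) (integrable_const _),
    integral_mul_const, integral_mul_const, integral_mul_const,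
    integral_const, integral_const, integral_const, I1, I2, I3]
  simp [measure_univ]

lemma convex_combo_nonneg {α β t : ℝ} (hα : 0 ≤ α) (hβ : 0 ≤ β)
    (ht : t ∈ Icc (0:ℝ) 1) : 0 ≤ (1 - t) * α + t * β :=
  add_nonneg (mul_nonneg (by linarith [ht.2]) hα) (mul_nonneg ht.1 hβ)

lemma convex_combo_le {α β t M : ℝ} (hα : α ≤ M) (hβ : β ≤ M)
    (ht : t ∈ Icc (0:ℝ) 1) : (1 - t) * α + t * β ≤ M := by
  nlinarith [ht.1, ht.2]


set_option maxHeartbeats 1000000 in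
/-- Three items with common values `v₁ ≥ v₂ ≥ v₃ > 0` and large budgets
(`Bᵢ ≥ max {(v₁+v₂+v₃)/2, v₁}`), in the case `(v₁+v₂+v₃)/2 > v₁`: with
`z = (v₁+v₂+v₃)/2`, `A = (v₁, 0, z - v₁)`, `B = (z - v₂, v₂, 0)`,
`C = (0, z - v₃, v₃)` and the probabilities `P_AB, P_BC, P_CA` below, both players
playing the mixture of uniform distributions on the segments `AB`, `BC`, `CA` with
these weights is a Nash equilibrium. -/
theorem nash_three_items_case1 (B : Fin 2 → ℝ) (v : Fin 3 → ℝ)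
    (hv3 : 0 < v 2) (hv23 : v 2 ≤ v 1) (hv12 : v 1 ≤ v 0)
    (hB : ∀ i, max ((v 0 + v 1 + v 2) / 2) (v 0) ≤ B i)
    (hz : v 0 < (v 0 + v 1 + v 2) / 2)
    (z : ℝ) (hzdef : z = (v 0 + v 1 + v 2) / 2)
    (A Bp C : ℝ × ℝ × ℝ)
    (hA : A = (v 0, 0, z - v 0)) (hBp : Bp = (z - v 1, v 1, 0))
    (hC : C = (0, z - v 2, v 2))
    (D PAB PBC PCA : ℝ)
    (hD : D = (z - v 2) / (z - v 1) + 1 + (z - v 2) / (z - v 0))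
    (hPAB : PAB = (z - v 2) / (z - v 1) / D)
    (hPBC : PBC = 1 / D)
    (hPCA : PCA = (z - v 2) / (z - v 0) / D) :
    IsNash3 B v (fun _ =>
      ENNReal.ofReal PAB • unifSeg3 A Bp +
        ENNReal.ofReal PBC • unifSeg3 Bp C +
        ENNReal.ofReal PCA • unifSeg3 C A) := by
  have hv1 : 0 < v 1 := lt_of_lt_of_le hv3 hv23
  have hv0 : 0 < v 0 := lt_of_lt_of_le hv1 hv12
  have h2z : z + z = v 0 + v 1 + v 2 := by rw [hzdef]; ring
  have hzv0 : v 0 < z := by rw [hzdef]; exact hz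
  have ha : 0 < z - v 0 := by linarith
  have hb : 0 < z - v 1 := by linarith
  have hc : 0 < z - v 2 := by linarith
  have hb0 : z - v 1 < v 0 := by linarith
  have hc1 : z - v 2 < v 1 := by linarith
  have ha1 : z - v 0 < v 2 := by linarith
  have hDpos : 0 < D := by rw [hD]; positivity
  have hPABnn : 0 ≤ PAB := by rw [hPAB]; positivity
  have hPBCnn : 0 ≤ PBC := by rw [hPBC]; positivity
  have hPCAnn : 0 ≤ PCA := by rw [hPCA]; positivity
  have hsum1 : PAB + PBC + PCA = 1 := by
    rw [hPAB, hPBC, hPCA, hD]; field_simp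
  have e1 : v 0 - (z - v 1) = z - v 2 := by linarith
  have e2 : v 1 - (z - v 2) = z - v 0 := by linarith
  have e3 : v 2 - (z - v 0) = z - v 1 := by linarith
  -- the three key piecewise-linear identities
  have hkey1 : ∀ x : ℝ, PAB * clamp ((x - (z - v 1)) / (z - v 2)) +
      PBC * clamp (x / (z - v 1)) + PCA * clamp (x / v 0) = clamp (x / v 0) := by
    intro x
    have hid : PBC * (z - v 2) = PAB * (z - v 1) := by
      rw [hPAB, hPBC]; field_simp
    have h := clampIdentity PAB PBC (z - v 1) (z - v 2) x hb hc hPABnn hPBCnn hid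
    have hsw : z - v 1 + (z - v 2) = v 0 := by linarith
    rw [hsw] at h
    linear_combination h + clamp (x / v 0) * hsum1
  have hkey2 : ∀ x : ℝ, PAB * clamp (x / v 1) +
      PBC * clamp ((x - (z - v 2)) / (z - v 0)) + PCA * clamp (x / (z - v 2)) =
      clamp (x / v 1) := by
    intro x
    have hid : PCA * (z - v 0) = PBC * (z - v 2) := by
      rw [hPBC, hPCA]; field_simp
    have h := clampIdentity PBC PCA (z - v 2) (z - v 0) x hc ha hPBCnn hPCAnn hid
    have hsw : z - v 2 + (z - v 0) = v 1 := by linarith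
    rw [hsw] at h
    linear_combination h + clamp (x / v 1) * hsum1
  have hkey3 : ∀ x : ℝ, PAB * clamp (x / (z - v 0)) +
      PBC * clamp (x / v 2) + PCA * clamp ((x - (z - v 0)) / (z - v 1)) =
      clamp (x / v 2) := by
    intro x
    have hid : PAB * (z - v 1) = PCA * (z - v 0) := by
      rw [hPAB, hPCA]; field_simp
    have h := clampIdentity PCA PAB (z - v 0) (z - v 1) x ha hb hPCAnn hPABnn hid
    have hsw : z - v 0 + (z - v 1) = v 2 := by linarith
    rw [hsw] at h
    linear_combination h + clamp (x / v 2) * hsum1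
  subst hA hBp hC
  -- per-segment payoff integrals
  have IAB : ∀ (i : Fin 2) (p : ℝ × ℝ × ℝ),
      ∫ q, payoff3 B v i p q ∂(unifSeg3 (v 0, 0, z - v 0) (z - v 1, v 1, 0)) =
      (clamp ((p.1 - (z - v 1)) / (z - v 2)) * v 0 - p.1) +
      (clamp (p.2.1 / v 1) * v 1 - p.2.1) +
      (clamp (p.2.2 / (z - v 0)) * v 2 - p.2.2) := by
    intro i p
    rw [integral_payoff_seg p _ _ (by simpa using (ne_of_gt hb0 : v 0 ≠ z - v 1))
      (by simpa using (ne_of_lt hv1 : (0:ℝ) ≠ v 1)) (by simpa using ha.ne')]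
    simp only
    rw [min_eq_right hb0.le, max_eq_left hb0.le, e1,
      min_eq_left hv1.le, max_eq_right hv1.le,
      min_eq_right ha.le, max_eq_left ha.le]
    simp only [sub_zero]
  have IBC : ∀ (i : Fin 2) (p : ℝ × ℝ × ℝ),
      ∫ q, payoff3 B v i p q ∂(unifSeg3 (z - v 1, v 1, 0) (0, z - v 2, v 2)) =
      (clamp (p.1 / (z - v 1)) * v 0 - p.1) +
      (clamp ((p.2.1 - (z - v 2)) / (z - v 0)) * v 1 - p.2.1) +
      (clamp (p.2.2 / v 2) * v 2 - p.2.2) := by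
    intro i p
    rw [integral_payoff_seg p _ _ (by simpa using hb.ne')
      (by simpa using (ne_of_gt hc1 : v 1 ≠ z - v 2)) (by simpa using (ne_of_lt hv3 : (0:ℝ) ≠ v 2))]
    simp only
    rw [min_eq_right hb.le, max_eq_left hb.le,
      min_eq_right hc1.le, max_eq_left hc1.le, e2,
      min_eq_left hv3.le, max_eq_right hv3.le]
    simp only [sub_zero]
  have ICA : ∀ (i : Fin 2) (p : ℝ × ℝ × ℝ),
      ∫ q, payoff3 B v i p q ∂(unifSeg3 (0, z - v 2, v 2) (v 0, 0, z - v 0)) =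
      (clamp (p.1 / v 0) * v 0 - p.1) +
      (clamp (p.2.1 / (z - v 2)) * v 1 - p.2.1) +
      (clamp ((p.2.2 - (z - v 0)) / (z - v 1)) * v 2 - p.2.2) := by
    intro i p
    rw [integral_payoff_seg p _ _ (by simpa using (ne_of_lt hv0 : (0:ℝ) ≠ v 0))
      (by simpa using hc.ne') (by simpa using (ne_of_gt ha1 : v 2 ≠ z - v 0))]
    simp only
    rw [min_eq_left hv0.le, max_eq_right hv0.le,
      min_eq_right hc.le, max_eq_left hc.le,
      min_eq_right ha1.le, max_eq_left ha1.le, e3]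
    simp only [sub_zero]
  set ν : Measure (ℝ × ℝ × ℝ) :=
    ENNReal.ofReal PAB • unifSeg3 (v 0, 0, z - v 0) (z - v 1, v 1, 0) +
      ENNReal.ofReal PBC • unifSeg3 (z - v 1, v 1, 0) (0, z - v 2, v 2) +
      ENNReal.ofReal PCA • unifSeg3 (0, z - v 2, v 2) (v 0, 0, z - v 0) with hνdef
  have hmix : ∀ (f : ℝ × ℝ × ℝ → ℝ),
      Integrable f (unifSeg3 (v 0, 0, z - v 0) (z - v 1, v 1, 0)) →
      Integrable f (unifSeg3 (z - v 1, v 1, 0) (0, z - v 2, v 2)) →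
      Integrable f (unifSeg3 (0, z - v 2, v 2) (v 0, 0, z - v 0)) →
      ∫ q, f q ∂ν =
        PAB * (∫ q, f q ∂(unifSeg3 (v 0, 0, z - v 0) (z - v 1, v 1, 0))) +
        PBC * (∫ q, f q ∂(unifSeg3 (z - v 1, v 1, 0) (0, z - v 2, v 2))) +
        PCA * (∫ q, f q ∂(unifSeg3 (0, z - v 2, v 2) (v 0, 0, z - v 0))) := by
    intro f i1 i2 i3
    rw [hνdef,
      integral_add_measure ((i1.smul_measure ENNReal.ofReal_ne_top).add_measure
        (i2.smul_measure ENNReal.ofReal_ne_top)) (i3.smul_measure ENNReal.ofReal_ne_top),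
      integral_add_measure (i1.smul_measure ENNReal.ofReal_ne_top)
        (i2.smul_measure ENNReal.ofReal_ne_top),
      integral_smul_measure, integral_smul_measure, integral_smul_measure,
      ENNReal.toReal_ofReal hPABnn, ENNReal.toReal_ofReal hPBCnn,
      ENNReal.toReal_ofReal hPCAnn, smul_eq_mul, smul_eq_mul, smul_eq_mul]
  have hInner : ∀ (i : Fin 2) (p : ℝ × ℝ × ℝ),
      ∫ q, payoff3 B v i p q ∂ν =
        (v 0 * clamp (p.1 / v 0) - p.1) + (v 1 * clamp (p.2.1 / v 1) - p.2.1) +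
        (v 2 * clamp (p.2.2 / v 2) - p.2.2) := by
    intro i p
    rw [hmix (fun q => payoff3 B v i p q) (integrable_payoff_seg p _ _)
        (integrable_payoff_seg p _ _) (integrable_payoff_seg p _ _),
      IAB i p, IBC i p, ICA i p]
    linear_combination (v 0) * hkey1 p.1 + (v 1) * hkey2 p.2.1 + (v 2) * hkey3 p.2.2 +
      (-(p.1 + p.2.1 + p.2.2)) * hsum1
  have hzB : ∀ i : Fin 2, z ≤ B i := fun i => by
    rw [hzdef]; exact le_trans (le_max_left _ _) (hB i)
  have hFeasMeas : ∀ i : Fin 2, MeasurableSet (Feas3 (B i)) := by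
    intro i
    have hrw : Feas3 (B i) = {p : ℝ × ℝ × ℝ | 0 ≤ p.1} ∩ {p | 0 ≤ p.2.1} ∩ {p | 0 ≤ p.2.2} ∩
        {p | p.1 + p.2.1 + p.2.2 ≤ B i} := by
      ext p; simp only [Feas3, mem_setOf_eq, mem_inter_iff]; tauto
    rw [hrw]
    refine MeasurableSet.inter (MeasurableSet.inter (MeasurableSet.inter ?_ ?_) ?_) ?_
    · exact measurableSet_le measurable_const measurable_fst
    · exact measurableSet_le measurable_const (measurable_fst.comp measurable_snd)
    · exact measurableSet_le measurable_const (measurable_snd.comp measurable_snd)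
    · exact measurableSet_le ((measurable_fst.add
        (measurable_fst.comp measurable_snd)).add (measurable_snd.comp measurable_snd))
        measurable_const
  set S : Set (ℝ × ℝ × ℝ) := {p : ℝ × ℝ × ℝ | (0 ≤ p.1 ∧ p.1 ≤ v 0) ∧ (0 ≤ p.2.1 ∧ p.2.1 ≤ v 1)
    ∧ (0 ≤ p.2.2 ∧ p.2.2 ≤ v 2)} with hSdef
  have hSMeas : MeasurableSet S := by
    rw [hSdef]
    have hrw : {p : ℝ × ℝ × ℝ | (0 ≤ p.1 ∧ p.1 ≤ v 0) ∧ (0 ≤ p.2.1 ∧ p.2.1 ≤ v 1)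
        ∧ (0 ≤ p.2.2 ∧ p.2.2 ≤ v 2)} =
        ({p : ℝ × ℝ × ℝ | 0 ≤ p.1} ∩ {p | p.1 ≤ v 0}) ∩ (({p | 0 ≤ p.2.1} ∩ {p | p.2.1 ≤ v 1}) ∩
          ({p | 0 ≤ p.2.2} ∩ {p | p.2.2 ≤ v 2})) := by
      ext p; simp only [mem_setOf_eq, mem_inter_iff, and_assoc]
    rw [hrw]
    refine MeasurableSet.inter (MeasurableSet.inter ?_ ?_)
      (MeasurableSet.inter (MeasurableSet.inter ?_ ?_) (MeasurableSet.inter ?_ ?_))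
    · exact measurableSet_le measurable_const measurable_fst
    · exact measurableSet_le measurable_fst measurable_const
    · exact measurableSet_le measurable_const (measurable_fst.comp measurable_snd)
    · exact measurableSet_le (measurable_fst.comp measurable_snd) measurable_const
    · exact measurableSet_le measurable_const (measurable_snd.comp measurable_snd)
    · exact measurableSet_le (measurable_snd.comp measurable_snd) measurable_const
  -- measure of Feas3 and S under each segment measure
  have mFeasAB : ∀ i : Fin 2,
      unifSeg3 (v 0, 0, z - v 0) (z - v 1, v 1, 0) (Feas3 (B i)) = 1 := by
    intro i
    apply unifSeg3_apply_eq_one _ _ (hFeasMeas i)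
    intro t ht
    simp only [segMap, Feas3, mem_setOf_eq]
    refine ⟨convex_combo_nonneg hv0.le hb.le ht, convex_combo_nonneg le_rfl hv1.le ht,
      convex_combo_nonneg ha.le le_rfl ht, ?_⟩
    have := hzB i
    nlinarith [ht.1, ht.2]
  have mFeasBC : ∀ i : Fin 2,
      unifSeg3 (z - v 1, v 1, 0) (0, z - v 2, v 2) (Feas3 (B i)) = 1 := by
    intro i
    apply unifSeg3_apply_eq_one _ _ (hFeasMeas i)
    intro t ht
    simp only [segMap, Feas3, mem_setOf_eq]
    refine ⟨convex_combo_nonneg hb.le le_rfl ht, convex_combo_nonneg hv1.le hc.le ht,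
      convex_combo_nonneg le_rfl hv3.le ht, ?_⟩
    have := hzB i
    nlinarith [ht.1, ht.2]
  have mFeasCA : ∀ i : Fin 2,
      unifSeg3 (0, z - v 2, v 2) (v 0, 0, z - v 0) (Feas3 (B i)) = 1 := by
    intro i
    apply unifSeg3_apply_eq_one _ _ (hFeasMeas i)
    intro t ht
    simp only [segMap, Feas3, mem_setOf_eq]
    refine ⟨convex_combo_nonneg le_rfl hv0.le ht, convex_combo_nonneg hc.le le_rfl ht,
      convex_combo_nonneg hv3.le ha.le ht, ?_⟩
    have := hzB i
    nlinarith [ht.1, ht.2]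
  have mSAB : unifSeg3 (v 0, 0, z - v 0) (z - v 1, v 1, 0) S = 1 := by
    apply unifSeg3_apply_eq_one _ _ hSMeas
    intro t ht
    simp only [segMap, hSdef, mem_setOf_eq]
    exact ⟨⟨convex_combo_nonneg hv0.le hb.le ht, convex_combo_le le_rfl hb0.le ht⟩,
      ⟨convex_combo_nonneg le_rfl hv1.le ht, convex_combo_le hv1.le le_rfl ht⟩,
      ⟨convex_combo_nonneg ha.le le_rfl ht, convex_combo_le ha1.le hv3.le ht⟩⟩
  have mSBC : unifSeg3 (z - v 1, v 1, 0) (0, z - v 2, v 2) S = 1 := by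
    apply unifSeg3_apply_eq_one _ _ hSMeas
    intro t ht
    simp only [segMap, hSdef, mem_setOf_eq]
    exact ⟨⟨convex_combo_nonneg hb.le le_rfl ht, convex_combo_le hb0.le hv0.le ht⟩,
      ⟨convex_combo_nonneg hv1.le hc.le ht, convex_combo_le le_rfl hc1.le ht⟩,
      ⟨convex_combo_nonneg le_rfl hv3.le ht, convex_combo_le hv3.le le_rfl ht⟩⟩
  have mSCA : unifSeg3 (0, z - v 2, v 2) (v 0, 0, z - v 0) S = 1 := by
    apply unifSeg3_apply_eq_one _ _ hSMeas
    intro t ht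
    simp only [segMap, hSdef, mem_setOf_eq]
    exact ⟨⟨convex_combo_nonneg le_rfl hv0.le ht, convex_combo_le hv0.le le_rfl ht⟩,
      ⟨convex_combo_nonneg hc.le le_rfl ht, convex_combo_le hc1.le hv1.le ht⟩,
      ⟨convex_combo_nonneg hv3.le ha.le ht, convex_combo_le le_rfl ha1.le ht⟩⟩
  have hofReal : ENNReal.ofReal PAB + ENNReal.ofReal PBC + ENNReal.ofReal PCA = 1 := by
    rw [← ENNReal.ofReal_add hPABnn hPBCnn, ← ENNReal.ofReal_add (by linarith) hPCAnn,
      hsum1, ENNReal.ofReal_one]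
  have hprob : IsProbabilityMeasure ν := by
    constructor
    rw [hνdef]
    simp only [Measure.add_apply, Measure.smul_apply, smul_eq_mul, measure_univ, mul_one]
    exact hofReal
  have hνFeas : ∀ i : Fin 2, ν (Feas3 (B i)) = 1 := by
    intro i
    rw [hνdef]
    simp only [Measure.add_apply, Measure.smul_apply, smul_eq_mul,
      mFeasAB i, mFeasBC i, mFeasCA i, mul_one]
    exact hofReal
  have hνS : ν S = 1 := by
    rw [hνdef]
    simp only [Measure.add_apply, Measure.smul_apply, smul_eq_mul, mSAB, mSBC, mSCA, mul_one]
    exact hofReal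
  constructor
  · exact fun i => ⟨hprob, hνFeas i⟩
  · intro i μ hμ
    show expUtil3 B v i μ ν ≤ expUtil3 B v i ν ν
    haveI : IsProbabilityMeasure μ := hμ.1
    unfold expUtil3
    simp only [hInner]
    have hR : ∫ p, ((v 0 * clamp (p.1 / v 0) - p.1) + (v 1 * clamp (p.2.1 / v 1) - p.2.1) +
        (v 2 * clamp (p.2.2 / v 2) - p.2.2)) ∂ν = 0 := by
      apply integral_eq_zero_of_ae
      have hae : ∀ᵐ p ∂ν, p ∈ S := by
        rw [ae_iff]
        have : ν Sᶜ = 0 := by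
          rw [prob_compl_eq_zero_iff hSMeas]; exact hνS
        simpa [compl_def] using this
      filter_upwards [hae] with p hp
      obtain ⟨⟨h10, h11⟩, ⟨h20, h21⟩, ⟨h30, h31⟩⟩ := hp
      show (v 0 * clamp (p.1 / v 0) - p.1) + (v 1 * clamp (p.2.1 / v 1) - p.2.1) +
        (v 2 * clamp (p.2.2 / v 2) - p.2.2) = 0
      rw [clamp_of_mem (div_nonneg h10 hv0.le) ((div_le_one hv0).mpr h11),
        clamp_of_mem (div_nonneg h20 hv1.le) ((div_le_one hv1).mpr h21),
        clamp_of_mem (div_nonneg h30 hv3.le) ((div_le_one hv3).mpr h31)]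
      field_simp
      ring
    have hL : ∫ p, ((v 0 * clamp (p.1 / v 0) - p.1) + (v 1 * clamp (p.2.1 / v 1) - p.2.1) +
        (v 2 * clamp (p.2.2 / v 2) - p.2.2)) ∂μ ≤ 0 := by
      apply integral_nonpos_of_ae
      have hae : ∀ᵐ p ∂μ, p ∈ Feas3 (B i) := by
        rw [ae_iff]
        have : μ (Feas3 (B i))ᶜ = 0 := by
          rw [prob_compl_eq_zero_iff (hFeasMeas i)]; exact hμ.2
        simpa [compl_def] using this
      filter_upwards [hae] with p hp
      obtain ⟨h1, h2, h3, -⟩ := hp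
      have b1 : v 0 * clamp (p.1 / v 0) ≤ p.1 := by
        calc v 0 * clamp (p.1 / v 0) ≤ v 0 * (p.1 / v 0) :=
          mul_le_mul_of_nonneg_left (clamp_le_self (div_nonneg h1 hv0.le)) hv0.le
        _ = p.1 := by field_simp
      have b2 : v 1 * clamp (p.2.1 / v 1) ≤ p.2.1 := by
        calc v 1 * clamp (p.2.1 / v 1) ≤ v 1 * (p.2.1 / v 1) :=
          mul_le_mul_of_nonneg_left (clamp_le_self (div_nonneg h2 hv1.le)) hv1.le
        _ = p.2.1 := by field_simp
      have b3 : v 2 * clamp (p.2.2 / v 2) ≤ p.2.2 := by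
        calc v 2 * clamp (p.2.2 / v 2) ≤ v 2 * (p.2.2 / v 2) :=
          mul_le_mul_of_nonneg_left (clamp_le_self (div_nonneg h3 hv3.le)) hv3.le
        _ = p.2.2 := by field_simp
      show (v 0 * clamp (p.1 / v 0) - p.1) + (v 1 * clamp (p.2.1 / v 1) - p.2.1) +
        (v 2 * clamp (p.2.2 / v 2) - p.2.2) ≤ 0
      linarith
    rw [hR]
    exact hL
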